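/- Let σ, τ ∈ AOP(n,m) be assemblies of ordered partitions. Then F(σ) = F(τ) if and only if σ ∼ τ, where σ ∼ τ means σ and τ have the same number ℓ of ordered partitions and for each a ∈ [ℓ], the a-th ordered partition of τ equals that of σ or its reversal. Consequently there is a bijection between B(n,m) and AOP(n,m)/∼. -/

import Mathlib

/-- An ordered partition: a list of (nonempty, pairwise disjoint) finite sets. -/
abbrev OP := List (Finset ℕ)

/-- An assembly of ordered partitions: a list of ordered partitions. -/
abbrev Assembly := List OP

/-- The union of the blocks of an ordered partition. -/
def Uop (op : OP) : Finset ℕ := op.foldr (· ∪ ·) ∅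

/-- `σ` is an assembly of ordered partitions of `[m]` with bound `n`. -/
def IsAOP (n m : ℕ) (σ : Assembly) : Prop :=
  (∀ op ∈ σ, op ≠ [] ∧ ∀ b ∈ op, b.Nonempty) ∧
  σ.flatten.Pairwise (fun s t => Disjoint s t) ∧
  σ.flatten.foldr (· ∪ ·) ∅ = Finset.Icc 1 m ∧
  σ.Pairwise (fun o₁ o₂ => (Uop o₁).min < (Uop o₂).min) ∧
  (σ.map List.length).sum + (σ.length - 1) ≤ n

/-- `x` and `y` lie in a common block of some ordered partition of `σ`. -/
def sameBlock (σ : Assembly) (x y : ℕ) : Prop :=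
  ∃ op ∈ σ, ∃ b ∈ op, x ∈ b ∧ y ∈ b

/-- `x` and `y` lie in consecutive blocks of some ordered partition of `σ`. -/
def adjBlock (σ : Assembly) (x y : ℕ) : Prop :=
  ∃ op ∈ σ, ∃ t : ℕ, t + 1 < op.length ∧
    ((x ∈ op[t]! ∧ y ∈ op[t + 1]!) ∨ (y ∈ op[t]! ∧ x ∈ op[t + 1]!))

/-- `x` and `y` are neighbors in `σ`. -/
def Neighbor (σ : Assembly) (x y : ℕ) : Prop := sameBlock σ x y ∨ adjBlock σ x y

open Classical in
/-- The Bott matrix `F(σ)` associated to an assembly `σ` of ordered partitions of `[m]`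
(the element of `[m]` corresponding to the index `j : Fin m` is `j + 1`). -/
noncomputable def FMat (m : ℕ) (σ : Assembly) : Matrix (Fin m) (Fin m) ℤ :=
  fun j k =>
    if j = k then -1
    else if k < j then
      (if sameBlock σ ((j : ℕ) + 1) ((k : ℕ) + 1) then -2
       else if adjBlock σ ((j : ℕ) + 1) ((k : ℕ) + 1) then 1 else 0)
    else 0

/-- The set of indices (1-based) on which the sequence `i` takes the value `v`. -/
def fiberSet (m : ℕ) (i : Fin m → ℤ) (v : ℤ) : Finset ℕ :=
  (Finset.univ.filter (fun k => i k = v)).image (fun k : Fin m => (k : ℕ) + 1)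

/-- Group a sorted list of integers into maximal runs of consecutive integers. -/
def groupRuns : List ℤ → List (List ℤ)
  | [] => []
  | a :: rest =>
    match groupRuns rest with
    | [] => [[a]]
    | [] :: gs => [a] :: [] :: gs
    | (b :: g) :: gs =>
        if a + 1 = b then (a :: b :: g) :: gs else [a] :: (b :: g) :: gs

/-- The map `α` sending a sequence to its assembly of ordered partitions. -/
def alpha (m : ℕ) (i : Fin m → ℤ) : Assembly :=
  (groupRuns ((Finset.image i Finset.univ).sort (· ≤ ·))).map
    (fun run => run.map (fiberSet m i))

/-- The equivalence `∼` on assemblies: same length, and each constituent ordered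
partition agrees up to reversal. -/
def SimRel (σ τ : Assembly) : Prop :=
  List.Forall₂ (fun s t => t = s ∨ t = s.reverse) σ τ

/-- The Bott matrix of BS type associated to a sequence `i`. -/
def bottMatrix (m : ℕ) (i : Fin m → ℤ) : Matrix (Fin m) (Fin m) ℤ :=
  fun j k =>
    if j = k then -1
    else if k < j then
      (if i j = i k then -2 else if |i j - i k| = 1 then 1 else 0)
    else 0

/-- The set `B(n,m)` of Bott matrices of BS type arising from sequences in `[n]^m`. -/
def BSet (n m : ℕ) : Set (Matrix (Fin m) (Fin m) ℤ) :=
  {B | ∃ i : Fin m → ℤ, (∀ t, i t ∈ Finset.Icc (1 : ℤ) n) ∧ B = bottMatrix m i}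

section Part1

lemma mem_foldr_union {x : ℕ} {l : List (Finset ℕ)} :
    x ∈ l.foldr (· ∪ ·) ∅ ↔ ∃ s ∈ l, x ∈ s := by
  induction l with
  | nil => simp
  | cons b l ih => simp [ih]

lemma mem_Uop {x : ℕ} {op : OP} : x ∈ Uop op ↔ ∃ b ∈ op, x ∈ b := mem_foldr_union

lemma Uop_reverse (op : OP) : Uop op.reverse = Uop op := by
  ext x; simp [mem_Uop]

/-- The support of an assembly. -/
def supp (σ : Assembly) : Finset ℕ := σ.flatten.foldr (· ∪ ·) ∅

lemma mem_supp {x : ℕ} {σ : Assembly} : x ∈ supp σ ↔ ∃ b ∈ σ.flatten, x ∈ b :=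
  mem_foldr_union

lemma supp_cons (op : OP) (rest : Assembly) : supp (op :: rest) = Uop op ∪ supp rest := by
  ext x; simp [mem_supp, mem_Uop, List.flatten_cons, or_and_right, exists_or]

/-- Goodness: nonempty blocks, pairwise disjoint. -/
def Good (σ : Assembly) : Prop :=
  (∀ op ∈ σ, op ≠ [] ∧ ∀ b ∈ op, b.Nonempty) ∧
  σ.flatten.Pairwise (fun s t => Disjoint s t)

namespace Good

variable {σ : Assembly} {op op₂ : OP} {B C b : Finset ℕ} {x y : ℕ}

lemma tail {rest : Assembly} (h : Good (op :: rest)) : Good rest := by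
  refine ⟨fun o ho => h.1 o (List.mem_cons_of_mem _ ho), ?_⟩
  have := h.2
  rw [List.flatten_cons, List.pairwise_append] at this
  exact this.2.1

lemma block_nonempty (h : Good σ) (hb : b ∈ σ.flatten) : b.Nonempty := by
  rw [List.mem_flatten] at hb
  obtain ⟨o, ho, hbo⟩ := hb
  exact (h.1 o ho).2 b hbo

lemma block_unique (h : Good σ) (hB : B ∈ σ.flatten) (hC : C ∈ σ.flatten)
    (hxB : x ∈ B) (hxC : x ∈ C) : B = C := by
  by_contra hne
  haveI : Std.Symm (fun s t : Finset ℕ => Disjoint s t) := ⟨fun a b hab => hab.symm⟩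
  have := h.2.forall hB hC hne
  exact absurd hxC (Finset.disjoint_left.mp this hxB)

lemma cross_disjoint (h : Good σ) (h1 : op ∈ σ) (h2 : op₂ ∈ σ) (hne : op ≠ op₂)
    (hB : B ∈ op) (hC : C ∈ op₂) : Disjoint B C := by
  have hp := (List.pairwise_flatten.mp h.2).2
  have hsym : Symmetric (fun l₁ l₂ : OP => ∀ x ∈ l₁, ∀ y ∈ l₂, Disjoint x y) := by
    intro l₁ l₂ hl x hx y hy
    exact (hl y hy x hx).symm
  haveI : Std.Symm (fun l₁ l₂ : OP => ∀ x ∈ l₁, ∀ y ∈ l₂, Disjoint x y) := ⟨fun a b hab => hsym hab⟩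
  exact hp.forall h1 h2 hne B hB C hC

lemma op_pairwise (h : Good σ) (h1 : op ∈ σ) : op.Pairwise (fun s t => Disjoint s t) :=
  (List.pairwise_flatten.mp h.2).1 op h1

lemma op_nodup (h : Good σ) (h1 : op ∈ σ) : op.Nodup := by
  refine (h.op_pairwise h1).imp_of_mem (fun {a b} ha hb hd => ?_)
  obtain ⟨z, hz⟩ := h.block_nonempty (List.mem_flatten.mpr ⟨op, h1, ha⟩)
  exact fun hab => absurd (hab ▸ hz) (Finset.disjoint_left.mp hd hz)

lemma op_eq (h : Good σ) (h1 : op ∈ σ) (h2 : op₂ ∈ σ)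
    (hB : B ∈ op) (hB2 : B ∈ op₂) : op = op₂ := by
  by_contra hne
  obtain ⟨z, hz⟩ := h.block_nonempty (List.mem_flatten.mpr ⟨op, h1, hB⟩)
  exact absurd hz (Finset.disjoint_left.mp (h.cross_disjoint h1 h2 hne hB hB2) hz)

lemma pos_unique (h : Good σ) (h1 : op ∈ σ) (h2 : op₂ ∈ σ) {t t₂ : ℕ}
    (ht : t < op.length) (ht₂ : t₂ < op₂.length) (heq : op[t]! = op₂[t₂]!) :
    op = op₂ ∧ t = t₂ := by
  rw [getElem!_pos op t ht, getElem!_pos op₂ t₂ ht₂] at heq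
  have hop : op = op₂ := h.op_eq h1 h2 (heq ▸ List.getElem_mem ht) (List.getElem_mem ht₂)
  subst hop
  exact ⟨rfl, ((h.op_nodup h1).getElem_inj_iff).mp heq⟩

end Good

lemma sameBlock_iff_flatten {σ : Assembly} {x y : ℕ} :
    sameBlock σ x y ↔ ∃ b ∈ σ.flatten, x ∈ b ∧ y ∈ b := by
  simp [sameBlock, List.mem_flatten]
  tauto

lemma sameBlock_comm {σ : Assembly} {x y : ℕ} : sameBlock σ x y ↔ sameBlock σ y x := by
  constructor <;> (rintro ⟨op, hop, b, hb, h1, h2⟩; exact ⟨op, hop, b, hb, h2, h1⟩)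

lemma adjBlock_comm {σ : Assembly} {x y : ℕ} : adjBlock σ x y ↔ adjBlock σ y x := by
  constructor <;> (rintro ⟨op, hop, t, ht, hc⟩; exact ⟨op, hop, t, ht, hc.symm⟩)

lemma sameBlock_mem_supp {σ : Assembly} {x y : ℕ} (h : sameBlock σ x y) : x ∈ supp σ := by
  rw [sameBlock_iff_flatten] at h
  obtain ⟨b, hb, hx, _⟩ := h
  exact mem_supp.mpr ⟨b, hb, hx⟩

lemma getElem!_mem {op : OP} {t : ℕ} (ht : t < op.length) : op[t]! ∈ op := by
  rw [getElem!_pos op t ht]; exact List.getElem_mem ht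

lemma adjBlock_mem_supp {σ : Assembly} {x y : ℕ} (h : adjBlock σ x y) : x ∈ supp σ := by
  obtain ⟨op, hop, t, ht, hc⟩ := h
  rcases hc with ⟨hx, _⟩ | ⟨_, hx⟩
  · exact mem_supp.mpr ⟨op[t]!, List.mem_flatten.mpr ⟨op, hop, getElem!_mem (by omega)⟩, hx⟩
  · exact mem_supp.mpr ⟨op[t+1]!, List.mem_flatten.mpr ⟨op, hop, getElem!_mem ht⟩, hx⟩

lemma sameBlock_self {σ : Assembly} {x : ℕ} (h : x ∈ supp σ) : sameBlock σ x x := by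
  rw [mem_supp] at h
  obtain ⟨b, hb, hx⟩ := h
  exact sameBlock_iff_flatten.mpr ⟨b, hb, hx, hx⟩

lemma Good.not_same_and_adj {σ : Assembly} {x y : ℕ} (h : Good σ)
    (hs : sameBlock σ x y) (ha : adjBlock σ x y) : False := by
  rw [sameBlock_iff_flatten] at hs
  obtain ⟨B, hB, hxB, hyB⟩ := hs
  obtain ⟨op, hop, t, ht, hc⟩ := ha
  have h1 : op[t]! ∈ σ.flatten := List.mem_flatten.mpr ⟨op, hop, getElem!_mem (by omega)⟩
  have h2 : op[t+1]! ∈ σ.flatten := List.mem_flatten.mpr ⟨op, hop, getElem!_mem ht⟩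
  have hne : op[t]! ≠ op[t+1]! := by
    rw [getElem!_pos op t (by omega), getElem!_pos op (t+1) ht]
    intro hh
    exact absurd (((h.op_nodup hop).getElem_inj_iff).mp hh) (by omega)
  rcases hc with ⟨hx, hy⟩ | ⟨hy, hx⟩
  · exact hne ((h.block_unique h1 hB hx hxB).trans (h.block_unique hB h2 hyB hy))
  · exact hne ((h.block_unique h1 hB hy hyB).trans (h.block_unique hB h2 hxB hx))

lemma Good.adj_irrefl {σ : Assembly} {x : ℕ} (h : Good σ) : ¬ adjBlock σ x x := by
  intro ha
  exact h.not_same_and_adj (sameBlock_self (adjBlock_mem_supp ha)) ha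

/-- Adjacency seen from a fixed occurrence of `x` in a block of `op`. -/
lemma Good.adj_iff {σ : Assembly} {op : OP} {t : ℕ} {x y : ℕ} (h : Good σ)
    (hop : op ∈ σ) (ht : t < op.length) (hx : x ∈ op[t]!) :
    adjBlock σ x y ↔ ∃ s, s < op.length ∧ (s + 1 = t ∨ t + 1 = s) ∧ y ∈ op[s]! := by
  constructor
  · rintro ⟨op₂, hop₂, t₂, ht₂, hc⟩
    rcases hc with ⟨hx₂, hy₂⟩ | ⟨hy₂, hx₂⟩
    · -- x ∈ op₂[t₂], y ∈ op₂[t₂+1]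
      have hBeq : op[t]! = op₂[t₂]! := by
        rw [getElem!_pos op t ht] at hx ⊢
        rw [getElem!_pos op₂ t₂ (by omega)] at hx₂ ⊢
        exact h.block_unique (List.mem_flatten.mpr ⟨op, hop, List.getElem_mem ht⟩)
          (List.mem_flatten.mpr ⟨op₂, hop₂, List.getElem_mem (by omega)⟩) hx hx₂
      obtain ⟨hope, hte⟩ := h.pos_unique hop hop₂ ht (by omega) hBeq
      subst hope; subst hte
      exact ⟨t + 1, ht₂, Or.inr rfl, hy₂⟩
    · -- y ∈ op₂[t₂], x ∈ op₂[t₂+1]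
      have hBeq : op[t]! = op₂[t₂+1]! := by
        rw [getElem!_pos op t ht] at hx ⊢
        rw [getElem!_pos op₂ (t₂+1) ht₂] at hx₂ ⊢
        exact h.block_unique (List.mem_flatten.mpr ⟨op, hop, List.getElem_mem ht⟩)
          (List.mem_flatten.mpr ⟨op₂, hop₂, List.getElem_mem ht₂⟩) hx hx₂
      obtain ⟨hope, hte⟩ := h.pos_unique hop hop₂ ht ht₂ hBeq
      subst hope
      exact ⟨t₂, by omega, Or.inl (by omega), hy₂⟩
  · rintro ⟨s, hs, hst, hy⟩
    rcases hst with h1 | h1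
    · refine ⟨op, hop, s, by omega, Or.inr ⟨hy, ?_⟩⟩
      rw [show s + 1 = t from h1]; exact hx
    · refine ⟨op, hop, t, by omega, Or.inl ⟨hx, ?_⟩⟩
      rw [show t + 1 = s from h1]; exact hy

/-- The block of `y` is determined by the `sameBlock` relation. -/
lemma blockOf_eq {σ τ : Assembly} {B C : Finset ℕ} {y : ℕ} (hσ : Good σ) (hτ : Good τ)
    (hrel : ∀ z, sameBlock σ y z ↔ sameBlock τ y z)
    (hB : B ∈ σ.flatten) (hC : C ∈ τ.flatten) (hyB : y ∈ B) (hyC : y ∈ C) : B = C := by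
  ext z
  have h1 : z ∈ B ↔ sameBlock σ y z := by
    constructor
    · exact fun hz => sameBlock_iff_flatten.mpr ⟨B, hB, hyB, hz⟩
    · rintro hs
      rw [sameBlock_iff_flatten] at hs
      obtain ⟨B', hB', hyB', hzB'⟩ := hs
      rwa [hσ.block_unique hB hB' hyB hyB']
  have h2 : z ∈ C ↔ sameBlock τ y z := by
    constructor
    · exact fun hz => sameBlock_iff_flatten.mpr ⟨C, hC, hyC, hz⟩
    · rintro hs
      rw [sameBlock_iff_flatten] at hs
      obtain ⟨C', hC', hyC', hzC'⟩ := hs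
      rwa [hτ.block_unique hC hC' hyC hyC']
  rw [h1, h2, hrel z]

end Part1
section Part2

variable {X : Type*} [Inhabited X]

/-- Neighbors of position `t` in a list. -/
def nbr (L : List X) (t : ℕ) : Set X :=
  {c | ∃ s, s < L.length ∧ (s + 1 = t ∨ t + 1 = s) ∧ c = L[s]!}

/-- Two lists have matching neighbor structure at all common elements. -/
def NbrEq (L L' : List X) : Prop :=
  ∀ t u, t < L.length → u < L'.length → L[t]! = L'[u]! → nbr L t = nbr L' u

lemma nbr_reverse (L : List X) {t : ℕ} (ht : t < L.length) :
    nbr L.reverse t = nbr L (L.length - 1 - t) := by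
  ext c
  constructor
  · rintro ⟨s, hs, hst, rfl⟩
    rw [List.length_reverse] at hs
    refine ⟨L.length - 1 - s, by omega, by omega, ?_⟩
    rw [getElem!_pos L.reverse s (by simpa using hs), getElem!_pos L _ (by omega),
      List.getElem_reverse]
  · rintro ⟨s, hs, hst, rfl⟩
    refine ⟨L.length - 1 - s, by simp; omega, by omega, ?_⟩
    rw [getElem!_pos L s hs, getElem!_pos L.reverse _ (by simp; omega),
      List.getElem_reverse]
    congr 1
    omega

lemma getElem!_reverse (L : List X) {t : ℕ} (ht : t < L.length) :
    L.reverse[t]! = L[L.length - 1 - t]! := by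
  rw [getElem!_pos L.reverse t (by simpa using ht), getElem!_pos L _ (by omega),
    List.getElem_reverse]

lemma NbrEq.rev_left {L L' : List X} (h : NbrEq L L') : NbrEq L.reverse L' := by
  intro t u ht hu heq
  rw [List.length_reverse] at ht
  rw [getElem!_reverse L ht] at heq
  rw [nbr_reverse L ht]
  exact h _ u (by omega) hu heq

lemma NbrEq.symm {L L' : List X} (h : NbrEq L L') : NbrEq L' L := by
  intro t u ht hu heq
  exact (h u t hu ht heq.symm).symm

/-- Marching lemma: an aligned adjacent pair propagates forward. -/
lemma NbrEq.march {L L' : List X} (hL : L.Nodup) (hL' : L'.Nodup) (h : NbrEq L L')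
    {t u : ℕ} (ht1 : t + 1 < L.length) (hu1 : u + 1 < L'.length)
    (h0 : L[t]! = L'[u]!) (h1 : L[t+1]! = L'[u+1]!) :
    ∀ k, (t + k < L.length ↔ u + k < L'.length) ∧
      (∀ htk : t + k < L.length, ∀ huk : u + k < L'.length, L[t+k]! = L'[u+k]!) := by
  intro k
  induction k using Nat.twoStepInduction with
  | zero => exact ⟨by omega, fun _ _ => h0⟩
  | one => exact ⟨by omega, fun _ _ => h1⟩
  | more k ih1 ih2 =>
    simp only [show t+(k+2) = t+k+2 from rfl, show u+(k+2) = u+k+2 from rfl]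
    have main : ∀ _ : t + k + 2 ≤ L.length, ∀ _ : u + k + 2 ≤ L'.length,
        (t + k + 2 < L.length → u + k + 2 < L'.length) ∧
        (t + k + 2 < L.length → u + k + 2 < L'.length → L[t+k+2]! = L'[u+k+2]!) := by
      intro htk2 huk2
      have hk : t + k < L.length := by omega
      have hk1 : t + (k+1) < L.length := by omega
      have huk : u + k < L'.length := by omega
      have huk1 : u + (k+1) < L'.length := by omega
      have e0 : L[t+k]! = L'[u+k]! := ih1.2 hk huk
      have e1 : L[t+k+1]! = L'[u+k+1]! := ih2.2 hk1 huk1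
      have hnb := h (t+k+1) (u+k+1) (by omega) (by omega) e1
      constructor
      · intro hlt
        by_contra hge
        have hmem : (L[t+k+2]! : X) ∈ nbr L (t+k+1) := ⟨t+k+2, by omega, by omega, rfl⟩
        rw [hnb] at hmem
        obtain ⟨s, hs, hst, hc⟩ := hmem
        have hsval : s = u + k := by omega
        subst hsval
        rw [← e0] at hc
        rw [getElem!_pos L _ (by omega), getElem!_pos L _ (by omega)] at hc
        have := (hL.getElem_inj_iff).mp hc
        omega
      · intro hlt hlt'
        have hmem : (L[t+k+2]! : X) ∈ nbr L (t+k+1) := ⟨t+k+2, by omega, by omega, rfl⟩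
        rw [hnb] at hmem
        obtain ⟨s, hs, hst, hc⟩ := hmem
        rcases hst with hh | hh
        · have hsval : s = u + k := by omega
          subst hsval
          exfalso
          rw [← e0] at hc
          rw [getElem!_pos L _ (by omega), getElem!_pos L _ (by omega)] at hc
          have := (hL.getElem_inj_iff).mp hc
          omega
        · have hsval : s = u + k + 2 := by omega
          subst hsval
          exact hc
    constructor
    · constructor
      · intro hlt
        have h1 : t + k + 2 ≤ L.length := by omega
        have hle : u + k + 1 < L'.length := by
          have := (ih2.1).mp (by omega : t + (k+1) < L.length)
          omega
        rcases Nat.lt_or_ge (u+k+2) L'.length with hx | hx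
        · omega
        · exact (main h1 (by omega)).1 hlt
      · intro hlt
        -- symmetric: use NbrEq.symm? easier: mirror argument
        have hle : t + k + 1 < L.length := by
          have := (ih2.1).mpr (by omega : u + (k+1) < L'.length)
          omega
        by_contra hge
        have e0 : L[t+k]! = L'[u+k]! := ih1.2 (by omega) (by omega)
        have e1 : L[t+k+1]! = L'[u+k+1]! := ih2.2 (by omega) (by omega)
        have hnb := h (t+k+1) (u+k+1) (by omega) (by omega) e1
        have hmem : (L'[u+k+2]! : X) ∈ nbr L' (u+k+1) := ⟨u+k+2, by omega, by omega, rfl⟩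
        rw [← hnb] at hmem
        obtain ⟨s, hs, hst, hc⟩ := hmem
        have hsval : s = t + k := by omega
        subst hsval
        rw [e0] at hc
        rw [getElem!_pos L' _ (by omega), getElem!_pos L' _ (by omega)] at hc
        have := (hL'.getElem_inj_iff).mp hc
        omega
    · intro htk huk
      exact (main (by omega) (by omega)).2 htk huk

/-- If heads agree, the whole lists agree. -/
lemma NbrEq.eq_of_head {L L' : List X} (hL : L.Nodup) (hL' : L'.Nodup) (h : NbrEq L L')
    (hn : L ≠ []) (hn' : L' ≠ []) (hhead : L[0]! = L'[0]!) : L = L' := by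
  have hl0 : 0 < L.length := List.length_pos_iff.mpr hn
  have hl0' : 0 < L'.length := List.length_pos_iff.mpr hn'
  -- Either both have length 1, or we can march
  by_cases h1 : 1 < L.length
  · have h1' : 1 < L'.length := by
      by_contra hge
      have hmem : (L[1]! : X) ∈ nbr L 0 := ⟨1, by omega, by omega, rfl⟩
      rw [h 0 0 hl0 hl0' hhead] at hmem
      obtain ⟨s, hs, hst, hc⟩ := hmem
      omega
    have h1e : L[1]! = L'[1]! := by
      have hmem : (L[1]! : X) ∈ nbr L 0 := ⟨1, by omega, by omega, rfl⟩
      rw [h 0 0 hl0 hl0' hhead] at hmem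
      obtain ⟨s, hs, hst, hc⟩ := hmem
      have : s = 1 := by omega
      subst this
      exact hc
    have hm := h.march hL hL' (t := 0) (u := 0) h1 h1' hhead h1e
    have hlen : L.length = L'.length := by
      by_contra hne
      rcases Nat.lt_or_ge L.length L'.length with hlt | hge
      · exact absurd ((hm L.length).1.mpr (by omega)) (by omega)
      · have := (hm L'.length).1.mp
        omega
    refine List.ext_getElem hlen (fun i hi hi' => ?_)
    have := (hm i).2 (by omega) (by omega)
    simp only [Nat.zero_add] at this
    rw [getElem!_pos L i hi, getElem!_pos L' i hi'] at this
    exact this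
  · -- L = [x]
    have h1' : ¬ 1 < L'.length := by
      intro hgt
      have hmem : (L'[1]! : X) ∈ nbr L' 0 := ⟨1, by omega, by omega, rfl⟩
      rw [← h 0 0 hl0 hl0' hhead] at hmem
      obtain ⟨s, hs, hst, hc⟩ := hmem
      omega
    have : L.length = L'.length := by omega
    refine List.ext_getElem this (fun i hi hi' => ?_)
    have : i = 0 := by omega
    subst this
    rw [getElem!_pos L 0 hl0, getElem!_pos L' 0 hl0'] at hhead
    exact hhead

/-- A common element at the start of `L'` must be an endpoint of `L`. -/
lemma NbrEq.endpoint {L L' : List X} (hL : L.Nodup) (h : NbrEq L L')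
    {t : ℕ} (ht : t < L.length) (hn' : L' ≠ []) (heq : L[t]! = L'[0]!) :
    t = 0 ∨ t = L.length - 1 := by
  by_contra hcon
  push_neg at hcon
  have h2 : 0 < t ∧ t + 1 < L.length := by omega
  have hnb := h t 0 ht (List.length_pos_iff.mpr hn') heq
  have hm1 : (L[t-1]! : X) ∈ nbr L t := ⟨t-1, by omega, by omega, rfl⟩
  have hm2 : (L[t+1]! : X) ∈ nbr L t := ⟨t+1, by omega, by omega, rfl⟩
  rw [hnb] at hm1 hm2
  obtain ⟨s1, hs1, hst1, hc1⟩ := hm1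
  obtain ⟨s2, hs2, hst2, hc2⟩ := hm2
  have hs1e : s1 = 1 := by omega
  have hs2e : s2 = 1 := by omega
  subst hs1e; subst hs2e
  rw [← hc2] at hc1
  rw [getElem!_pos L _ (by omega), getElem!_pos L _ (by omega)] at hc1
  have := (hL.getElem_inj_iff).mp hc1
  omega

/-- Main path lemma: nodup lists with matching neighbor structure sharing an
element are equal or reverses of each other. -/
lemma NbrEq.eq_or_reverse {L L' : List X} (hL : L.Nodup) (hL' : L'.Nodup)
    (h : NbrEq L L') {t u : ℕ} (ht : t < L.length) (hu : u < L'.length)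
    (heq : L[t]! = L'[u]!) : L' = L ∨ L' = L.reverse := by
  -- first, find a shared element at position 0 of L'
  have key : ∃ t', t' < L.length ∧ L[t']! = L'[0]! := by
    rcases Nat.eq_zero_or_pos u with rfl | hu0
    · exact ⟨t, ht, heq⟩
    · -- L'[u-1]! ∈ nbr L' u = nbr L t
      have hm : (L'[u-1]! : X) ∈ nbr L' u := ⟨u-1, by omega, by omega, rfl⟩
      rw [← h t u ht hu heq] at hm
      obtain ⟨s, hs, hst, hc⟩ := hm
      rcases hst with hh | hh
      · -- L[s]! = L'[u-1]!, s + 1 = t : march on reversed lists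
        have hmar := (h.rev_left.symm.rev_left.symm).march
          (List.nodup_reverse.mpr hL) (List.nodup_reverse.mpr hL')
          (t := L.length - 1 - t) (u := L'.length - 1 - u)
          (by simp only [List.length_reverse]; omega)
          (by simp only [List.length_reverse]; omega)
          (by rw [getElem!_reverse L (by omega), getElem!_reverse L' (by omega)]
              rw [show L.length - 1 - (L.length - 1 - t) = t by omega,
                show L'.length - 1 - (L'.length - 1 - u) = u by omega]
              exact heq)
          (by rw [getElem!_reverse L (by omega), getElem!_reverse L' (by omega)]
              rw [show L.length - 1 - (L.length - 1 - t + 1) = s by omega,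
                show L'.length - 1 - (L'.length - 1 - u + 1) = u - 1 by omega]
              exact hc.symm)
        have hk := hmar u
        simp only [List.length_reverse] at hk
        have hlt : L.length - 1 - t + u < L.length := hk.1.mpr (by omega)
        have hfin := hk.2 (by omega) (by omega)
        rw [getElem!_reverse L (by omega), getElem!_reverse L' (by omega),
          show L'.length - 1 - (L'.length - 1 - u + u) = 0 by omega] at hfin
        exact ⟨L.length - 1 - (L.length - 1 - t + u), by omega, hfin⟩
      · -- L[s]! = L'[u-1]!, t + 1 = s : march on (L, L'.reverse)
        have hmar := (h.symm.rev_left.symm).march hL (List.nodup_reverse.mpr hL')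
          (t := t) (u := L'.length - 1 - u)
          (by omega) (by simp only [List.length_reverse]; omega)
          (by rw [getElem!_reverse L' (by omega),
              show L'.length - 1 - (L'.length - 1 - u) = u by omega]
              exact heq)
          (by rw [getElem!_reverse L' (by omega),
              show L'.length - 1 - (L'.length - 1 - u + 1) = u - 1 by omega, hh]
              exact hc.symm)
        have hk := hmar u
        simp only [List.length_reverse] at hk
        have hlt : t + u < L.length := hk.1.mpr (by omega)
        have hfin := hk.2 (by omega) (by omega)
        rw [getElem!_reverse L' (by omega),
          show L'.length - 1 - (L'.length - 1 - u + u) = 0 by omega] at hfin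
        exact ⟨t + u, hlt, hfin⟩
  obtain ⟨t', ht', heq'⟩ := key
  have hn' : L' ≠ [] := by
    intro hnil
    rw [hnil] at hu
    simp at hu
  have hn : L ≠ [] := by
    intro hnil
    rw [hnil] at ht
    simp at ht
  rcases h.endpoint hL ht' hn' heq' with h0 | hend
  · subst h0
    exact Or.inl (h.eq_of_head hL hL' hn hn' heq').symm
  · right
    have : L.reverse[0]! = L'[0]! := by
      rw [getElem!_reverse L (by omega)]
      rw [show L.length - 1 - 0 = L.length - 1 by omega, ← hend]
      exact heq'
    exact (h.rev_left.eq_of_head (List.nodup_reverse.mpr hL) hL' (by simp [hn]) hn' this).symm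

end Part2
section Part3

variable {σ τ : Assembly} {op op' : OP} {x y : ℕ}

lemma Uop_nonempty (h : Good σ) (hop : op ∈ σ) : (Uop op).Nonempty := by
  obtain ⟨hne, hb⟩ := h.1 op hop
  obtain ⟨b, l, rfl⟩ : ∃ b l, op = b :: l := by
    cases op with
    | nil => exact absurd rfl hne
    | cons b l => exact ⟨b, l, rfl⟩
  obtain ⟨z, hz⟩ := hb b (List.mem_cons_self (a := b) (l := l))
  exact ⟨z, mem_Uop.mpr ⟨b, List.mem_cons_self (a := b) (l := l), hz⟩⟩

lemma disjoint_Uop_supp {rest : Assembly} (h : Good (op :: rest)) {x : ℕ}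
    (h1 : x ∈ Uop op) (h2 : x ∈ supp rest) : False := by
  obtain ⟨b, hb, hxb⟩ := mem_Uop.mp h1
  obtain ⟨c, hc, hxc⟩ := mem_supp.mp h2
  have hpa := h.2
  rw [List.flatten_cons, List.pairwise_append] at hpa
  exact absurd hxc (Finset.disjoint_left.mp (hpa.2.2 b hb c hc) hxb)

lemma sameBlock_cons {rest : Assembly} :
    sameBlock (op :: rest) x y ↔ (∃ b ∈ op, x ∈ b ∧ y ∈ b) ∨ sameBlock rest x y := by
  constructor
  · rintro ⟨op₂, hop₂, b, hb, hx, hy⟩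
    rcases List.mem_cons.mp hop₂ with rfl | hmem
    · exact Or.inl ⟨b, hb, hx, hy⟩
    · exact Or.inr ⟨op₂, hmem, b, hb, hx, hy⟩
  · rintro (⟨b, hb, hx, hy⟩ | ⟨op₂, hop₂, b, hb, hx, hy⟩)
    · exact ⟨op, List.mem_cons_self (a := op) (l := rest), b, hb, hx, hy⟩
    · exact ⟨op₂, List.mem_cons_of_mem _ hop₂, b, hb, hx, hy⟩

/-- Adjacency within a single ordered partition. -/
def adjIn (op : OP) (x y : ℕ) : Prop :=
  ∃ t : ℕ, t + 1 < op.length ∧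
    ((x ∈ op[t]! ∧ y ∈ op[t + 1]!) ∨ (y ∈ op[t]! ∧ x ∈ op[t + 1]!))

lemma adjBlock_cons {rest : Assembly} :
    adjBlock (op :: rest) x y ↔ adjIn op x y ∨ adjBlock rest x y := by
  constructor
  · rintro ⟨op₂, hop₂, t, ht, hc⟩
    rcases List.mem_cons.mp hop₂ with rfl | hmem
    · exact Or.inl ⟨t, ht, hc⟩
    · exact Or.inr ⟨op₂, hmem, t, ht, hc⟩
  · rintro (⟨t, ht, hc⟩ | ⟨op₂, hop₂, t, ht, hc⟩)
    · exact ⟨op, List.mem_cons_self (a := op) (l := rest), t, ht, hc⟩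
    · exact ⟨op₂, List.mem_cons_of_mem _ hop₂, t, ht, hc⟩

lemma adjIn_mem_Uop_left (h : adjIn op x y) : x ∈ Uop op := by
  obtain ⟨t, ht, hc⟩ := h
  rcases hc with ⟨hx, _⟩ | ⟨_, hx⟩
  · exact mem_Uop.mpr ⟨op[t]!, getElem!_mem (by omega), hx⟩
  · exact mem_Uop.mpr ⟨op[t+1]!, getElem!_mem ht, hx⟩

lemma sameBlock_in_Uop_left {b : Finset ℕ} (hb : b ∈ op) (hx : x ∈ b) : x ∈ Uop op :=
  mem_Uop.mpr ⟨b, hb, hx⟩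

/-- One-sided inclusion of neighborhoods. -/
lemma nbr_subset_of_rels (hσ : Good σ) (hτ : Good τ)
    (hsame : ∀ x y, sameBlock σ x y ↔ sameBlock τ x y)
    (hadj : ∀ x y, adjBlock σ x y ↔ adjBlock τ x y)
    (hop : op ∈ σ) (hop' : op' ∈ τ) {t u : ℕ}
    (ht : t < op.length) (hu : u < op'.length) (heq : op[t]! = op'[u]!) :
    nbr op t ⊆ nbr op' u := by
  rintro C ⟨s, hs, hst, rfl⟩
  obtain ⟨x, hx⟩ := hσ.block_nonempty (List.mem_flatten.mpr ⟨op, hop, getElem!_mem ht⟩)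
  obtain ⟨y, hy⟩ := hσ.block_nonempty (List.mem_flatten.mpr ⟨op, hop, getElem!_mem hs⟩)
  have hadjσ : adjBlock σ x y := (hσ.adj_iff hop ht hx).mpr ⟨s, hs, hst, hy⟩
  have hadjτ : adjBlock τ x y := (hadj x y).mp hadjσ
  have hx' : x ∈ op'[u]! := heq ▸ hx
  obtain ⟨s', hs', hst', hy'⟩ := (hτ.adj_iff hop' hu hx').mp hadjτ
  have hCeq : op[s]! = op'[s']! := by
    refine blockOf_eq hσ hτ (fun z => hsame y z)
      (List.mem_flatten.mpr ⟨op, hop, getElem!_mem hs⟩)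
      (List.mem_flatten.mpr ⟨op', hop', getElem!_mem hs'⟩) hy hy'
  exact ⟨s', hs', hst', hCeq⟩

lemma nbrEq_of_rels (hσ : Good σ) (hτ : Good τ)
    (hsame : ∀ x y, sameBlock σ x y ↔ sameBlock τ x y)
    (hadj : ∀ x y, adjBlock σ x y ↔ adjBlock τ x y)
    (hop : op ∈ σ) (hop' : op' ∈ τ) : NbrEq op op' := by
  intro t u ht hu heq
  apply Set.Subset.antisymm
  · exact nbr_subset_of_rels hσ hτ hsame hadj hop hop' ht hu heq
  · exact nbr_subset_of_rels hτ hσ (fun a b => (hsame a b).symm) (fun a b => (hadj a b).symm)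
      hop' hop hu ht heq.symm

/-- The key structural induction: same relations imply SimRel. -/
lemma simRel_of_rels : ∀ (σ : Assembly), ∀ {τ : Assembly}, Good σ → Good τ →
    σ.Pairwise (fun o₁ o₂ => (Uop o₁).min < (Uop o₂).min) →
    τ.Pairwise (fun o₁ o₂ => (Uop o₁).min < (Uop o₂).min) →
    supp σ = supp τ →
    (∀ x y, sameBlock σ x y ↔ sameBlock τ x y) →
    (∀ x y, adjBlock σ x y ↔ adjBlock τ x y) →
    SimRel σ τ := by
  intro σ
  induction σ with
  | nil =>
    intro τ hσ hτ hsσ hsτ hsupp hsame hadj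
    cases τ with
    | nil => exact List.Forall₂.nil
    | cons op' rest' =>
      exfalso
      obtain ⟨z, hz⟩ := Uop_nonempty hτ (List.mem_cons_self (a := op') (l := rest'))
      have : z ∈ supp (op' :: rest') := by
        rw [supp_cons]; exact Finset.mem_union_left _ hz
      rw [← hsupp] at this
      simp [supp] at this
  | cons op rest ih =>
    intro τ hσ hτ hsσ hsτ hsupp hsame hadj
    cases τ with
    | nil =>
      exfalso
      obtain ⟨z, hz⟩ := Uop_nonempty hσ (List.mem_cons_self (a := op) (l := rest))
      have : z ∈ supp (op :: rest) := by
        rw [supp_cons]; exact Finset.mem_union_left _ hz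
      rw [hsupp] at this
      simp [supp] at this
    | cons op' rest' =>
      -- the global minimum lies in the head of both assemblies
      have hs_ne : (supp (op :: rest)).Nonempty := by
        obtain ⟨z, hz⟩ := Uop_nonempty hσ (List.mem_cons_self (a := op) (l := rest))
        exact ⟨z, by rw [supp_cons]; exact Finset.mem_union_left _ hz⟩
      set x₀ := (supp (op :: rest)).min' hs_ne with hx₀def
      have hx₀mem : x₀ ∈ supp (op :: rest) := Finset.min'_mem _ _
      have hmin_head : ∀ (ρ : Assembly) (o : OP) (r : Assembly), Good (o :: r) →
          (o :: r).Pairwise (fun o₁ o₂ => (Uop o₁).min < (Uop o₂).min) →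
          ρ = o :: r → x₀ ∈ supp (o :: r) →
          (∀ z ∈ supp (o :: r), x₀ ≤ z) → x₀ ∈ Uop o := by
        intro ρ o r hg hsort _ hmem hle
        obtain ⟨b, hb, hxb⟩ := mem_supp.mp hmem
        rw [List.flatten_cons, List.mem_append] at hb
        rcases hb with hb | hb
        · exact mem_Uop.mpr ⟨b, hb, hxb⟩
        · exfalso
          obtain ⟨oa, hoa, hboa⟩ := List.mem_flatten.mp hb
          have hlt : (Uop o).min < (Uop oa).min :=
            (List.pairwise_cons.mp hsort).1 oa hoa
          have hun : (Uop o).Nonempty := Uop_nonempty hg (List.mem_cons_self (a := o) (l := r))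
          set y₀ := (Uop o).min' hun with hy₀
          have hcoe : ((y₀ : ℕ) : WithTop ℕ) = (Uop o).min := Finset.coe_min' hun
          have h2 : (Uop oa).min ≤ (x₀ : WithTop ℕ) :=
            Finset.min_le (mem_Uop.mpr ⟨b, hboa, hxb⟩)
          have h3 : ((y₀ : ℕ) : WithTop ℕ) < (x₀ : WithTop ℕ) := by
            rw [hcoe]
            exact lt_of_lt_of_le hlt h2
          have h4 : y₀ < x₀ := by exact_mod_cast h3
          have h5 : y₀ ∈ supp (o :: r) := by
            rw [supp_cons]
            exact Finset.mem_union_left _ (Finset.min'_mem _ _)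
          exact absurd (hle y₀ h5) (by omega)
      have hx₀op : x₀ ∈ Uop op :=
        hmin_head (op :: rest) op rest hσ hsσ rfl hx₀mem
          (fun z hz => Finset.min'_le _ _ hz)
      have hx₀op' : x₀ ∈ Uop op' := by
        refine hmin_head (op' :: rest') op' rest' hτ hsτ rfl ?_ ?_
        · rwa [← hsupp]
        · intro z hz
          exact Finset.min'_le _ _ (hsupp ▸ hz)
      -- shared block, PATH lemma
      obtain ⟨B, hB, hxB⟩ := mem_Uop.mp hx₀op
      obtain ⟨B', hB', hxB'⟩ := mem_Uop.mp hx₀op'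
      have hBB' : B = B' := blockOf_eq hσ hτ (fun z => hsame x₀ z)
        (List.mem_flatten.mpr ⟨op, List.mem_cons_self (a := op) (l := rest), hB⟩)
        (List.mem_flatten.mpr ⟨op', List.mem_cons_self (a := op') (l := rest'), hB'⟩) hxB hxB'
      obtain ⟨t, ht, hBt⟩ := List.mem_iff_getElem.mp hB
      obtain ⟨u, hu, hB't⟩ := List.mem_iff_getElem.mp hB'
      have heq : op[t]! = op'[u]! := by
        rw [getElem!_pos op t ht, getElem!_pos op' u hu, hBt, hB't, hBB']
      have hnbr : NbrEq op op' :=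
        nbrEq_of_rels hσ hτ hsame hadj (List.mem_cons_self (a := op) (l := rest))
          (List.mem_cons_self (a := op') (l := rest'))
      have hor : op' = op ∨ op' = op.reverse :=
        hnbr.eq_or_reverse (hσ.op_nodup (List.mem_cons_self (a := op) (l := rest)))
          (hτ.op_nodup (List.mem_cons_self (a := op') (l := rest'))) ht hu heq
      have hUop : Uop op' = Uop op := by
        rcases hor with rfl | rfl
        · rfl
        · exact Uop_reverse op
      -- tail hypotheses
      have hsame' : ∀ x y, sameBlock rest x y ↔ sameBlock rest' x y := by
        intro x y
        constructor
        · intro hsb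
          have hxU : x ∉ Uop op := by
            intro hxU
            exact disjoint_Uop_supp hσ hxU (sameBlock_mem_supp hsb)
          have h1 : sameBlock (op :: rest) x y := sameBlock_cons.mpr (Or.inr hsb)
          have h2 := (hsame x y).mp h1
          rcases sameBlock_cons.mp h2 with ⟨b, hb, hx, hy⟩ | h3
          · exact absurd (hUop ▸ sameBlock_in_Uop_left hb hx) hxU
          · exact h3
        · intro hsb
          have hxU : x ∉ Uop op' := by
            intro hxU
            exact disjoint_Uop_supp hτ hxU (sameBlock_mem_supp hsb)
          have h1 : sameBlock (op' :: rest') x y := sameBlock_cons.mpr (Or.inr hsb)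
          have h2 := (hsame x y).mpr h1
          rcases sameBlock_cons.mp h2 with ⟨b, hb, hx, hy⟩ | h3
          · exact absurd (sameBlock_in_Uop_left hb hx) (hUop ▸ hxU)
          · exact h3
      have hadj' : ∀ x y, adjBlock rest x y ↔ adjBlock rest' x y := by
        intro x y
        constructor
        · intro hsb
          have hxU : x ∉ Uop op := by
            intro hxU
            exact disjoint_Uop_supp hσ hxU (adjBlock_mem_supp hsb)
          have h1 : adjBlock (op :: rest) x y := adjBlock_cons.mpr (Or.inr hsb)
          have h2 := (hadj x y).mp h1
          rcases adjBlock_cons.mp h2 with hin | h3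
          · exact absurd (hUop ▸ adjIn_mem_Uop_left hin) hxU
          · exact h3
        · intro hsb
          have hxU : x ∉ Uop op' := by
            intro hxU
            exact disjoint_Uop_supp hτ hxU (adjBlock_mem_supp hsb)
          have h1 : adjBlock (op' :: rest') x y := adjBlock_cons.mpr (Or.inr hsb)
          have h2 := (hadj x y).mpr h1
          rcases adjBlock_cons.mp h2 with hin | h3
          · exact absurd (adjIn_mem_Uop_left hin) (hUop ▸ hxU)
          · exact h3
      have hsupp' : supp rest = supp rest' := by
        ext z
        constructor
        · intro hz
          have hz1 : z ∈ supp (op' :: rest') := by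
            rw [← hsupp, supp_cons]
            exact Finset.mem_union_right _ hz
          rw [supp_cons] at hz1
          rcases Finset.mem_union.mp hz1 with hz2 | hz2
          · exact absurd hz (fun hc => disjoint_Uop_supp hσ (hUop ▸ hz2) hc)
          · exact hz2
        · intro hz
          have hz1 : z ∈ supp (op :: rest) := by
            rw [hsupp, supp_cons]
            exact Finset.mem_union_right _ hz
          rw [supp_cons] at hz1
          rcases Finset.mem_union.mp hz1 with hz2 | hz2
          · exact absurd hz (fun hc => disjoint_Uop_supp hτ (hUop ▸ hz2) hc)
          · exact hz2
      exact List.Forall₂.cons hor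
        (ih hσ.tail hτ.tail (List.Pairwise.of_cons hsσ) (List.Pairwise.of_cons hsτ)
          hsupp' hsame' hadj')

end Part3
section Part4

variable {σ τ : Assembly} {op : OP} {x y : ℕ} {n m : ℕ}

lemma adjIn_reverse_imp (h : adjIn op x y) : adjIn op.reverse x y := by
  obtain ⟨t, ht, hc⟩ := h
  set N := op.length with hN
  refine ⟨N - 2 - t, by simp [hN]; omega, ?_⟩
  have h1 : op.reverse[N - 2 - t]! = op[t + 1]! := by
    rw [getElem!_reverse op (by omega)]
    congr 1
    omega
  have h2 : op.reverse[N - 2 - t + 1]! = op[t]! := by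
    rw [getElem!_reverse op (by omega)]
    congr 1
    omega
  rw [h1, h2]
  rcases hc with ⟨hx, hy⟩ | ⟨hy, hx⟩
  · exact Or.inr ⟨hy, hx⟩
  · exact Or.inl ⟨hx, hy⟩

lemma adjIn_reverse : adjIn op.reverse x y ↔ adjIn op x y := by
  constructor
  · intro h
    have := adjIn_reverse_imp h
    rwa [List.reverse_reverse] at this
  · exact adjIn_reverse_imp

lemma simRel_sameBlock (h : SimRel σ τ) : ∀ x y, sameBlock σ x y ↔ sameBlock τ x y := by
  induction h with
  | nil =>
    intro x y
    constructor <;> rintro ⟨op, hop, _⟩ <;> simp at hop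
  | @cons a b l₁ l₂ hab hl ih =>
    intro x y
    rw [sameBlock_cons, sameBlock_cons, ih x y]
    rcases hab with rfl | rfl
    · rfl
    · constructor <;> (rintro (⟨blk, hblk, hm⟩ | hr))
      · exact Or.inl ⟨blk, List.mem_reverse.mpr hblk, hm⟩
      · exact Or.inr hr
      · exact Or.inl ⟨blk, List.mem_reverse.mp hblk, hm⟩
      · exact Or.inr hr

lemma simRel_adjBlock (h : SimRel σ τ) : ∀ x y, adjBlock σ x y ↔ adjBlock τ x y := by
  induction h with
  | nil =>
    intro x y
    constructor <;> rintro ⟨op, hop, _⟩ <;> simp at hop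
  | @cons a b l₁ l₂ hab hl ih =>
    intro x y
    rw [adjBlock_cons, adjBlock_cons, ih x y]
    rcases hab with rfl | rfl
    · rfl
    · rw [adjIn_reverse]

lemma FMat_eq_of_simRel (h : SimRel σ τ) : FMat m σ = FMat m τ := by
  have e1 : sameBlock σ = sameBlock τ := by
    funext a b
    exact propext (simRel_sameBlock h a b)
  have e2 : adjBlock σ = adjBlock τ := by
    funext a b
    exact propext (simRel_adjBlock h a b)
  funext j k
  simp only [FMat]
  rw [e1, e2]

lemma ite_code_inj {p1 q1 p2 q2 : Prop} [Decidable p1] [Decidable q1] [Decidable p2]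
    [Decidable q2] (h1 : ¬(p1 ∧ q1)) (h2 : ¬(p2 ∧ q2))
    (h : (if p1 then (-2 : ℤ) else if q1 then 1 else 0) =
      (if p2 then (-2 : ℤ) else if q2 then 1 else 0)) :
    (p1 ↔ p2) ∧ (q1 ↔ q2) := by
  split_ifs at h with c1 c2 c3 c4 <;> first | omega | tauto

lemma rels_of_FMat_eq (hσ : IsAOP n m σ) (hτ : IsAOP n m τ)
    (h : FMat m σ = FMat m τ) :
    (∀ x y, sameBlock σ x y ↔ sameBlock τ x y) ∧
    (∀ x y, adjBlock σ x y ↔ adjBlock τ x y) := by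
  have hGσ : Good σ := ⟨hσ.1, hσ.2.1⟩
  have hGτ : Good τ := ⟨hτ.1, hτ.2.1⟩
  have hsσ : supp σ = Finset.Icc 1 m := hσ.2.2.1
  have hsτ : supp τ = Finset.Icc 1 m := hτ.2.2.1
  have key : ∀ x y, x ∈ Finset.Icc 1 m → y ∈ Finset.Icc 1 m → y < x →
      (sameBlock σ x y ↔ sameBlock τ x y) ∧ (adjBlock σ x y ↔ adjBlock τ x y) := by
    intro x y hx hy hlt
    classical
    rw [Finset.mem_Icc] at hx hy
    have hm : 0 < m := by omega
    set j : Fin m := ⟨x - 1, by omega⟩ with hj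
    set k : Fin m := ⟨y - 1, by omega⟩ with hk
    have hjk := congrFun (congrFun h j) k
    have hne : ¬ (j = k) := by
      simp only [hj, hk, Fin.mk.injEq]
      omega
    have hklt : k < j := by
      simp only [hj, hk, Fin.lt_def]
      omega
    simp only [FMat] at hjk
    rw [if_neg hne, if_pos hklt, if_neg hne, if_pos hklt] at hjk
    have hx1 : (j : ℕ) + 1 = x := by simp only [hj]; omega
    have hy1 : (k : ℕ) + 1 = y := by simp only [hk]; omega
    rw [hx1, hy1] at hjk
    exact ite_code_inj (fun ⟨a, b⟩ => hGσ.not_same_and_adj a b)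
      (fun ⟨a, b⟩ => hGτ.not_same_and_adj a b) hjk
  constructor
  · intro x y
    by_cases hx : x ∈ Finset.Icc 1 m
    · by_cases hy : y ∈ Finset.Icc 1 m
      · rcases lt_trichotomy x y with hlt | rfl | hlt
        · exact sameBlock_comm.trans (((key y x hy hx hlt).1).trans sameBlock_comm)
        · exact iff_of_true (sameBlock_self (by rw [hsσ]; exact hx))
            (sameBlock_self (by rw [hsτ]; exact hx))
        · exact (key x y hx hy hlt).1
      · exact iff_of_false
          (fun hc => hy (hsσ ▸ sameBlock_mem_supp (sameBlock_comm.mp hc)))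
          (fun hc => hy (hsτ ▸ sameBlock_mem_supp (sameBlock_comm.mp hc)))
    · exact iff_of_false
        (fun hc => hx (hsσ ▸ sameBlock_mem_supp hc))
        (fun hc => hx (hsτ ▸ sameBlock_mem_supp hc))
  · intro x y
    by_cases hx : x ∈ Finset.Icc 1 m
    · by_cases hy : y ∈ Finset.Icc 1 m
      · rcases lt_trichotomy x y with hlt | rfl | hlt
        · exact adjBlock_comm.trans (((key y x hy hx hlt).2).trans adjBlock_comm)
        · exact iff_of_false hGσ.adj_irrefl hGτ.adj_irrefl
        · exact (key x y hx hy hlt).2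
      · exact iff_of_false
          (fun hc => hy (hsσ ▸ adjBlock_mem_supp (adjBlock_comm.mp hc)))
          (fun hc => hy (hsτ ▸ adjBlock_mem_supp (adjBlock_comm.mp hc)))
    · exact iff_of_false
        (fun hc => hx (hsσ ▸ adjBlock_mem_supp hc))
        (fun hc => hx (hsτ ▸ adjBlock_mem_supp hc))

/-- Part 1 of the main theorem. -/
lemma FMat_eq_iff_simRel (hσ : IsAOP n m σ) (hτ : IsAOP n m τ) :
    FMat m σ = FMat m τ ↔ SimRel σ τ := by
  constructor
  · intro h
    obtain ⟨hsame, hadj⟩ := rels_of_FMat_eq hσ hτ h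
    exact simRel_of_rels σ ⟨hσ.1, hσ.2.1⟩ ⟨hτ.1, hτ.2.1⟩ hσ.2.2.2.1 hτ.2.2.2.1
      (hσ.2.2.1.trans hτ.2.2.1.symm) hsame hadj
  · exact FMat_eq_of_simRel

end Part4
section Part5

/-- Index of the block of `op` containing `x`. -/
def opIdx : OP → ℕ → ℕ
  | [], _ => 0
  | b :: bs, x => if x ∈ b then 0 else opIdx bs x + 1

/-- Value of `x` in the assembly `σ`, with starting value `s`. -/
def valA : Assembly → ℕ → ℕ → ℕ
  | [], _, _ => 0
  | op :: rest, s, x =>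
    if x ∈ Uop op then s + opIdx op x else valA rest (s + op.length + 1) x

variable {σ : Assembly} {op : OP} {x y s : ℕ}

lemma mem_Uop_cons {b : Finset ℕ} {bs : OP} :
    x ∈ Uop (b :: bs) ↔ x ∈ b ∨ x ∈ Uop bs := by
  simp [mem_Uop]

lemma opIdx_lt (h : x ∈ Uop op) : opIdx op x < op.length := by
  induction op with
  | nil => simp [Uop] at h
  | cons b bs ih =>
    rw [mem_Uop_cons] at h
    by_cases hb : x ∈ b
    · simp [opIdx, hb]
    · have := ih (h.resolve_left hb)
      simp [opIdx, hb]
      omega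

lemma mem_opIdx (h : x ∈ Uop op) : x ∈ op[opIdx op x]! := by
  induction op with
  | nil => simp [Uop] at h
  | cons b bs ih =>
    rw [mem_Uop_cons] at h
    by_cases hb : x ∈ b
    · simp only [opIdx, hb, if_true]
      rw [getElem!_pos (b :: bs) 0 (by simp)]
      simpa using hb
    · have h' := h.resolve_left hb
      have hlt := opIdx_lt h'
      simp only [opIdx, hb, if_false]
      rw [getElem!_pos (b :: bs) _ (by simp; omega)]
      rw [List.getElem_cons_succ]
      have := ih h'
      rwa [getElem!_pos bs _ hlt] at this

lemma opIdx_eq_of_mem (hp : op.Pairwise (fun s t => Disjoint s t)) {t : ℕ}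
    (ht : t < op.length) (hx : x ∈ op[t]!) : opIdx op x = t := by
  induction op generalizing t with
  | nil => simp at ht
  | cons b bs ih =>
    rcases Nat.eq_zero_or_pos t with rfl | htpos
    · rw [getElem!_pos (b :: bs) 0 (by simp)] at hx
      simp at hx
      simp [opIdx, hx]
    · obtain ⟨t', rfl⟩ : ∃ t', t = t' + 1 := ⟨t - 1, by omega⟩
      rw [getElem!_pos (b :: bs) _ ht, List.getElem_cons_succ] at hx
      have ht' : t' < bs.length := by simp at ht; omega
      have hxb : x ∉ b := by
        intro hxb
        have hd := (List.pairwise_cons.mp hp).1 bs[t'] (List.getElem_mem ht')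
        exact absurd hx (Finset.disjoint_left.mp hd hxb)
      simp only [opIdx, hxb, if_false]
      have := ih (List.pairwise_cons.mp hp).2 ht' (by rwa [getElem!_pos bs _ ht'])
      omega

lemma opIdx_same (hp : op.Pairwise (fun s t => Disjoint s t))
    (hx : x ∈ Uop op) (hy : y ∈ Uop op) :
    (opIdx op x = opIdx op y ↔ ∃ b ∈ op, x ∈ b ∧ y ∈ b) := by
  constructor
  · intro h
    refine ⟨op[opIdx op x]!, getElem!_mem (opIdx_lt hx), mem_opIdx hx, ?_⟩
    rw [h]
    exact mem_opIdx hy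
  · rintro ⟨b, hb, hxb, hyb⟩
    obtain ⟨t, ht, rfl⟩ := List.mem_iff_getElem.mp hb
    rw [opIdx_eq_of_mem hp ht (by rwa [getElem!_pos op _ ht]),
      opIdx_eq_of_mem hp ht (by rwa [getElem!_pos op _ ht])]

lemma opIdx_adj (hp : op.Pairwise (fun s t => Disjoint s t))
    (hx : x ∈ Uop op) (hy : y ∈ Uop op) :
    ((opIdx op x + 1 = opIdx op y ∨ opIdx op y + 1 = opIdx op x) ↔ adjIn op x y) := by
  constructor
  · rintro (h | h)
    · exact ⟨opIdx op x, by rw [h]; exact opIdx_lt hy,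
        Or.inl ⟨mem_opIdx hx, by rw [h]; exact mem_opIdx hy⟩⟩
    · exact ⟨opIdx op y, by rw [h]; exact opIdx_lt hx,
        Or.inr ⟨mem_opIdx hy, by rw [h]; exact mem_opIdx hx⟩⟩
  · rintro ⟨t, ht, ⟨hxt, hyt⟩ | ⟨hyt, hxt⟩⟩
    · left
      rw [opIdx_eq_of_mem hp (by omega) hxt, opIdx_eq_of_mem hp ht hyt]
    · right
      rw [opIdx_eq_of_mem hp (by omega) hyt, opIdx_eq_of_mem hp ht hxt]

lemma adjIn_comm {op : OP} {x y : ℕ} : adjIn op x y ↔ adjIn op y x := by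
  constructor <;> (rintro ⟨t, ht, hc⟩; exact ⟨t, ht, hc.symm⟩)

lemma mem_supp_cons {rest : Assembly} :
    x ∈ supp (op :: rest) ↔ x ∈ Uop op ∨ x ∈ supp rest := by
  rw [supp_cons]; simp

lemma valA_ge (h : x ∈ supp σ) : ∀ s, s ≤ valA σ s x := by
  induction σ with
  | nil => simp [supp] at h
  | cons op rest ih =>
    intro s
    by_cases hU : x ∈ Uop op
    · simp [valA, hU]
    · have h' : x ∈ supp rest := (mem_supp_cons.mp h).resolve_left hU
      simp only [valA, hU, if_false]
      have := ih h' (s + op.length + 1)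
      omega

lemma valA_le (h : x ∈ supp σ) :
    ∀ s, valA σ s x + 2 ≤ s + (σ.map List.length).sum + σ.length := by
  induction σ with
  | nil => simp [supp] at h
  | cons op rest ih =>
    intro s
    by_cases hU : x ∈ Uop op
    · have h1 := opIdx_lt hU
      simp only [valA, hU, if_true, List.map_cons, List.sum_cons, List.length_cons]
      omega
    · have h' : x ∈ supp rest := (mem_supp_cons.mp h).resolve_left hU
      simp only [valA, hU, if_false, List.map_cons, List.sum_cons, List.length_cons]
      have := ih h' (s + op.length + 1)
      omega

lemma length_pos_of_mem_supp (h : x ∈ supp σ) : σ ≠ [] := by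
  rintro rfl
  simp [supp] at h

lemma valA_same (hG : Good σ) (hx : x ∈ supp σ) (hy : y ∈ supp σ) :
    ∀ s, (valA σ s x = valA σ s y ↔ sameBlock σ x y) := by
  induction σ with
  | nil => simp [supp] at hx
  | cons op rest ih =>
    intro s
    have hself : op ∈ op :: rest := List.mem_cons_self (a := op) (l := rest)
    by_cases hxU : x ∈ Uop op <;> by_cases hyU : y ∈ Uop op
    · simp only [valA, hxU, hyU, if_true]
      rw [Nat.add_left_cancel_iff, opIdx_same (hG.op_pairwise hself) hxU hyU,
        sameBlock_cons]
      constructor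
      · exact Or.inl
      · rintro (h | h)
        · exact h
        · exact absurd (sameBlock_mem_supp h) (fun hc => disjoint_Uop_supp hG hxU hc)
    · have hy' : y ∈ supp rest := (mem_supp_cons.mp hy).resolve_left hyU
      simp only [valA, hxU, hyU, if_true, if_false]
      have h1 := opIdx_lt hxU
      have h2 := valA_ge hy' (s + op.length + 1)
      constructor
      · intro h; omega
      · intro h
        exfalso
        rcases sameBlock_cons.mp h with ⟨b, hb, hxb, hyb⟩ | h
        · exact hyU (sameBlock_in_Uop_left hb hyb)
        · exact disjoint_Uop_supp hG hxU (sameBlock_mem_supp h)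
    · have hx' : x ∈ supp rest := (mem_supp_cons.mp hx).resolve_left hxU
      simp only [valA, hxU, hyU, if_true, if_false]
      have h1 := opIdx_lt hyU
      have h2 := valA_ge hx' (s + op.length + 1)
      constructor
      · intro h; omega
      · intro h
        exfalso
        rcases sameBlock_cons.mp h with ⟨b, hb, hxb, hyb⟩ | h
        · exact hxU (sameBlock_in_Uop_left hb hxb)
        · exact disjoint_Uop_supp hG hyU (sameBlock_mem_supp (sameBlock_comm.mp h))
    · have hx' : x ∈ supp rest := (mem_supp_cons.mp hx).resolve_left hxU
      have hy' : y ∈ supp rest := (mem_supp_cons.mp hy).resolve_left hyU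
      simp only [valA, hxU, hyU, if_false]
      rw [ih hG.tail hx' hy', sameBlock_cons]
      constructor
      · exact Or.inr
      · rintro (⟨b, hb, hxb, _⟩ | h)
        · exact absurd (sameBlock_in_Uop_left hb hxb) hxU
        · exact h

lemma valA_adj (hG : Good σ) (hx : x ∈ supp σ) (hy : y ∈ supp σ) :
    ∀ s, ((valA σ s x + 1 = valA σ s y ∨ valA σ s y + 1 = valA σ s x) ↔ adjBlock σ x y) := by
  induction σ with
  | nil => simp [supp] at hx
  | cons op rest ih =>
    intro s
    have hself : op ∈ op :: rest := List.mem_cons_self (a := op) (l := rest)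
    by_cases hxU : x ∈ Uop op <;> by_cases hyU : y ∈ Uop op
    · simp only [valA, hxU, hyU, if_true]
      rw [adjBlock_cons]
      have base : (opIdx op x + 1 = opIdx op y ∨ opIdx op y + 1 = opIdx op x) ↔
          adjIn op x y := opIdx_adj (hG.op_pairwise hself) hxU hyU
      constructor
      · intro h
        exact Or.inl (base.mp (by omega))
      · rintro (h | h)
        · have := base.mpr h
          omega
        · exfalso
          exact disjoint_Uop_supp hG hxU (adjBlock_mem_supp h)
    · have hy' : y ∈ supp rest := (mem_supp_cons.mp hy).resolve_left hyU
      simp only [valA, hxU, hyU, if_true, if_false]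
      have h1 := opIdx_lt hxU
      have h2 := valA_ge hy' (s + op.length + 1)
      constructor
      · intro h; omega
      · intro h
        exfalso
        rcases adjBlock_cons.mp h with h | h
        · exact hyU (adjIn_mem_Uop_left (adjIn_comm.mp h))
        · exact disjoint_Uop_supp hG hxU (adjBlock_mem_supp h)
    · have hx' : x ∈ supp rest := (mem_supp_cons.mp hx).resolve_left hxU
      simp only [valA, hxU, hyU, if_true, if_false]
      have h1 := opIdx_lt hyU
      have h2 := valA_ge hx' (s + op.length + 1)
      constructor
      · intro h; omega
      · intro h
        exfalso
        rcases adjBlock_cons.mp h with h | h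
        · exact hxU (adjIn_mem_Uop_left h)
        · exact disjoint_Uop_supp hG hyU
            (adjBlock_mem_supp (adjBlock_comm.mp h))
    · have hx' : x ∈ supp rest := (mem_supp_cons.mp hx).resolve_left hxU
      have hy' : y ∈ supp rest := (mem_supp_cons.mp hy).resolve_left hyU
      simp only [valA, hxU, hyU, if_false]
      rw [ih hG.tail hx' hy', adjBlock_cons]
      constructor
      · exact Or.inr
      · rintro (h | h)
        · exact absurd (adjIn_mem_Uop_left h) hxU
        · exact h

end Part5
section Part6

variable {n m : ℕ} {σ : Assembly}

lemma int_adj_iff {a b : ℕ} : (|(a : ℤ) - (b : ℤ)| = 1) ↔ (a + 1 = b ∨ b + 1 = a) := by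
  rw [abs_sub_comm, abs_eq (by norm_num : (0:ℤ) ≤ 1)]
  omega

lemma FMat_mem_BSet (hσ : IsAOP n m σ) : FMat m σ ∈ BSet n m := by
  have hG : Good σ := ⟨hσ.1, hσ.2.1⟩
  have hsupp : supp σ = Finset.Icc 1 m := hσ.2.2.1
  have hmem : ∀ j : Fin m, ((j : ℕ) + 1) ∈ supp σ := by
    intro j
    rw [hsupp, Finset.mem_Icc]
    omega
  refine ⟨fun k => ((valA σ 1 ((k : ℕ) + 1) : ℕ) : ℤ), ?_, ?_⟩
  · intro j
    change ((valA σ 1 ((j : ℕ) + 1) : ℕ) : ℤ) ∈ Finset.Icc (1 : ℤ) (n : ℤ)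
    rw [Finset.mem_Icc]
    have h1 := valA_ge (hmem j) 1
    have h2 := valA_le (hmem j) 1
    have h3 := hσ.2.2.2.2
    have h4 : σ ≠ [] := length_pos_of_mem_supp (hmem j)
    have h5 : 0 < σ.length := List.length_pos_iff.mpr h4
    constructor
    · exact_mod_cast h1
    · have : valA σ 1 ((j : ℕ) + 1) ≤ n := by omega
      exact_mod_cast this
  · funext j k
    simp only [FMat, bottMatrix]
    by_cases h1 : j = k
    · simp [h1]
    · simp only [h1, if_false]
      by_cases h2 : k < j
      · simp only [h2, if_true]
        have hx := hmem j
        have hy := hmem k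
        have hsame := valA_same hG hx hy 1
        have hadj := valA_adj hG hx hy 1
        by_cases h3 : sameBlock σ ((j : ℕ) + 1) ((k : ℕ) + 1)
        · have h3' : ((valA σ 1 ((j : ℕ) + 1) : ℕ) : ℤ) = ((valA σ 1 ((k : ℕ) + 1) : ℕ) : ℤ) := by
            exact_mod_cast hsame.mpr h3
          simp [h3, h3']
        · have h3' : ¬ ((valA σ 1 ((j : ℕ) + 1) : ℕ) : ℤ) = ((valA σ 1 ((k : ℕ) + 1) : ℕ) : ℤ) := by
            intro hc
            exact h3 (hsame.mp (by exact_mod_cast hc))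
          by_cases h4 : adjBlock σ ((j : ℕ) + 1) ((k : ℕ) + 1)
          · have h4' : |((valA σ 1 ((j : ℕ) + 1) : ℕ) : ℤ) - ((valA σ 1 ((k : ℕ) + 1) : ℕ) : ℤ)| = 1 :=
              int_adj_iff.mpr (hadj.mpr h4)
            simp [h3, h3', h4, h4']
          · have h4' : ¬ |((valA σ 1 ((j : ℕ) + 1) : ℕ) : ℤ) - ((valA σ 1 ((k : ℕ) + 1) : ℕ) : ℤ)| = 1 := by
              intro hc
              exact h4 (hadj.mp (int_adj_iff.mp hc))
            simp [h3, h3', h4, h4']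
      · simp [h2]

end Part6
section Part7

/-- Group a strictly increasing list into maximal runs of consecutive integers. -/
def runs : List ℤ → List (List ℤ)
  | [] => []
  | a :: l =>
    match runs l with
    | (b :: g) :: gs => if a + 1 = b then (a :: b :: g) :: gs else [a] :: (b :: g) :: gs
    | gs => [a] :: gs

lemma runs_nil : runs [] = [] := rfl

lemma runs_cons_struct (a : ℤ) (l : List ℤ) :
    ∃ g gs, runs (a :: l) = (a :: g) :: gs := by
  rcases hr : runs l with _ | ⟨g1, gs⟩
  · exact ⟨[], [], by simp [runs, hr]⟩
  · cases g1 with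
    | nil => exact ⟨[], [] :: gs, by simp [runs, hr]⟩
    | cons b g =>
      by_cases hab : a + 1 = b
      · exact ⟨b :: g, gs, by simp [runs, hr, hab]⟩
      · exact ⟨[], (b :: g) :: gs, by simp [runs, hr, hab]⟩

lemma runs_flatten : ∀ (L : List ℤ), (runs L).flatten = L := by
  intro L
  induction L with
  | nil => rfl
  | cons a l ih =>
    rcases hr : runs l with _ | ⟨g1, gs⟩
    · rw [hr] at ih
      simp at ih
      simp [runs, hr, ih]
    · rw [hr] at ih
      cases g1 with
      | nil => simp only [runs, hr]; simpa using ih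
      | cons b g =>
        by_cases hab : a + 1 = b
        · simp only [runs, hr, hab, if_true]
          simpa using ih
        · simp only [runs, hr, hab, if_false]
          simpa using ih

lemma runs_ne_nil : ∀ (L : List ℤ), ∀ g ∈ runs L, g ≠ [] := by
  intro L
  induction L with
  | nil => simp [runs]
  | cons a l ih =>
    intro g hg
    rcases hr : runs l with _ | ⟨g1, gs⟩
    · rw [runs, hr] at hg
      simp at hg
      simp [hg]
    · rw [hr] at ih
      cases g1 with
      | nil => exact absurd rfl (ih [] (List.mem_cons_self))
      | cons b g1'
      =>
        by_cases hab : a + 1 = b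
        · rw [runs, hr] at hg
          simp only [hab, if_true] at hg
          rcases List.mem_cons.mp hg with rfl | hmem
          · simp
          · exact ih g (List.mem_cons_of_mem _ hmem)
        · rw [runs, hr] at hg
          simp only [hab, if_false] at hg
          rcases List.mem_cons.mp hg with rfl | hmem
          · simp
          · exact ih g hmem

lemma runs_chain : ∀ (L : List ℤ), ∀ g ∈ runs L, List.Chain' (fun p q => p + 1 = q) g := by
  intro L
  induction L with
  | nil => simp [runs]
  | cons a l ih =>
    intro g hg
    rcases hr : runs l with _ | ⟨g1, gs⟩
    · rw [runs, hr] at hg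
      simp at hg
      rw [hg]; exact List.isChain_singleton _
    · rw [hr] at ih
      cases g1 with
      | nil =>
        rw [runs, hr] at hg
        rcases List.mem_cons.mp hg with rfl | hmem
        · exact List.isChain_singleton _
        · exact ih _ hmem
      | cons b g1' =>
        by_cases hab : a + 1 = b
        · rw [runs, hr] at hg
          simp only [hab, if_true] at hg
          rcases List.mem_cons.mp hg with rfl | hmem
          · have := ih (b :: g1') (List.mem_cons_self)
            exact List.isChain_cons_cons.mpr ⟨hab, this⟩
          · exact ih g (List.mem_cons_of_mem _ hmem)
        · rw [runs, hr] at hg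
          simp only [hab, if_false] at hg
          rcases List.mem_cons.mp hg with rfl | hmem
          · exact List.isChain_singleton _
          · exact ih g hmem

lemma runs_pair : ∀ (L : List ℤ), L.Pairwise (· < ·) → ∀ v : ℤ, v ∈ L → v + 1 ∈ L →
    ∃ g ∈ runs L, ∃ t, t + 1 < g.length ∧ g[t]! = v ∧ g[t+1]! = v + 1 := by
  intro L
  induction L with
  | nil => simp
  | cons a l ih =>
    intro hp v hv hv1
    have hlt : ∀ x ∈ l, a < x := (List.pairwise_cons.mp hp).1
    have hp' : l.Pairwise (· < ·) := (List.pairwise_cons.mp hp).2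
    by_cases hva : v = a
    · -- v is the head; v+1 must be the head of l
      subst hva
      have hv1l : v + 1 ∈ l := by
        rcases List.mem_cons.mp hv1 with h | h
        · omega
        · exact h
      obtain ⟨c, l', rfl⟩ : ∃ c l', l = c :: l' := by
        cases l with
        | nil => simp at hv1l
        | cons c l' => exact ⟨c, l', rfl⟩
      have hvc : v < c := hlt c (List.mem_cons_self)
      have hc : c = v + 1 := by
        rcases List.mem_cons.mp hv1l with h | h
        · omega
        · have := (List.pairwise_cons.mp hp').1 (v+1) h
          omega
      obtain ⟨g, gs, hstruct⟩ := runs_cons_struct c l'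
      have hruns : runs (v :: c :: l') = (v :: c :: g) :: gs := by
        rw [runs, hstruct]
        simp [show v + 1 = c from hc.symm]
      rw [hruns]
      refine ⟨v :: c :: g, List.mem_cons_self, 0, by simp, ?_, ?_⟩
      · simp
      · simp [List.getElem!_cons_succ, List.getElem!_cons_zero]
        omega
    · have hvl : v ∈ l := (List.mem_cons.mp hv).resolve_left hva
      have hv1l : v + 1 ∈ l := by
        rcases List.mem_cons.mp hv1 with h | h
        · exfalso
          have := hlt v hvl
          omega
        · exact h
      obtain ⟨g, hg, t, ht, he1, he2⟩ := ih hp' v hvl hv1l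
      obtain ⟨c, l', rfl⟩ : ∃ c l', l = c :: l' := by
        cases l with
        | nil => simp at hvl
        | cons c l' => exact ⟨c, l', rfl⟩
      obtain ⟨g0, gs0, hstruct⟩ := runs_cons_struct c l'
      by_cases hab : a + 1 = c
      · have hruns : runs (a :: c :: l') = (a :: c :: g0) :: gs0 := by
          rw [runs, hstruct]
          simp [hab]
        rw [hstruct] at hg
        rcases List.mem_cons.mp hg with rfl | hmem
        · refine ⟨a :: c :: g0, by rw [hruns]; exact List.mem_cons_self, t + 1, ?_, ?_, ?_⟩
          · simp at ht ⊢
            omega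
          · rw [List.getElem!_cons_succ]
            exact he1
          · rw [List.getElem!_cons_succ]
            exact he2
        · exact ⟨g, by rw [hruns]; exact List.mem_cons_of_mem _ hmem, t, ht, he1, he2⟩
      · have hruns : runs (a :: c :: l') = [a] :: (c :: g0) :: gs0 := by
          rw [runs, hstruct]
          simp [hab]
        rw [hstruct] at hg
        exact ⟨g, by rw [hruns]; exact List.mem_cons_of_mem _ hg, t, ht, he1, he2⟩

lemma runs_span : ∀ (l : List ℤ) (a : ℤ), (a :: l).Pairwise (· < ·) →
    a + ((a :: l).length : ℤ) + ((runs (a :: l)).length : ℤ) ≤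
      (a :: l).getLast (List.cons_ne_nil a l) + 2 := by
  intro l
  induction l with
  | nil =>
    intro a _
    simp [runs]
  | cons b l' ih =>
    intro a hp
    have hab : a < b := (List.pairwise_cons.mp hp).1 b (List.mem_cons_self)
    have hp' : (b :: l').Pairwise (· < ·) := (List.pairwise_cons.mp hp).2
    have hIH := ih b hp'
    obtain ⟨g, gs, hstruct⟩ := runs_cons_struct b l'
    have hlast : (a :: b :: l').getLast (List.cons_ne_nil a (b :: l')) =
        (b :: l').getLast (List.cons_ne_nil b l') := List.getLast_cons (List.cons_ne_nil b l')
    by_cases hab1 : a + 1 = b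
    · have hruns : runs (a :: b :: l') = (a :: b :: g) :: gs := by
        rw [runs, hstruct]
        simp [hab1]
      rw [hruns, hlast]
      rw [hstruct] at hIH
      simp only [List.length_cons] at hIH ⊢
      push_cast at hIH ⊢
      omega
    · have hruns : runs (a :: b :: l') = [a] :: (b :: g) :: gs := by
        rw [runs, hstruct]
        simp [hab1]
      rw [hruns, hlast]
      rw [hstruct] at hIH
      simp only [List.length_cons] at hIH ⊢
      push_cast at hIH ⊢
      omega

end Part7
section Part8

variable {n m : ℕ} {σ τ : Assembly} {x y : ℕ}

lemma chain'_getElem! {g : List ℤ} {R : ℤ → ℤ → Prop} (h : List.Chain' R g) {t : ℕ}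
    (ht : t + 1 < g.length) : R g[t]! g[t+1]! := by
  rw [getElem!_pos g t (by omega), getElem!_pos g (t+1) ht]
  exact List.isChain_iff_getElem.mp h t (by omega)

lemma map_getElem! {α β : Type*} [Inhabited α] [Inhabited β] (f : α → β) {g : List α} {t : ℕ}
    (ht : t < g.length) : (g.map f)[t]! = f g[t]! := by
  rw [getElem!_pos (g.map f) t (by simpa), getElem!_pos g t ht, List.getElem_map]

lemma flatten_map_map {α β : Type*} (f : α → β) (L : List (List α)) :
    (L.map (List.map f)).flatten = L.flatten.map f := by
  induction L with
  | nil => simp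
  | cons l L ih => simp only [List.map_cons, List.flatten_cons, List.map_append, ih]

lemma abs_sub_eq_one_iff {a b : ℤ} : |a - b| = 1 ↔ (a + 1 = b ∨ b + 1 = a) := by
  rw [abs_eq (by norm_num : (0:ℤ) ≤ 1)]
  omega

/-- The sorted list of values of `i`. -/
def Vlist (m : ℕ) (i : Fin m → ℤ) : List ℤ := (Finset.image i Finset.univ).sort (· ≤ ·)

/-- The unsorted assembly associated to `i`. -/
def sig0 (m : ℕ) (i : Fin m → ℤ) : Assembly :=
  (runs (Vlist m i)).map (fun g => g.map (fiberSet m i))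

variable {i : Fin m → ℤ}

lemma Vlist_pairwise : (Vlist m i).Pairwise (· < ·) := (Finset.sortedLT_sort _).pairwise

lemma mem_Vlist {v : ℤ} : v ∈ Vlist m i ↔ ∃ k, i k = v := by
  simp [Vlist, Finset.mem_sort]

lemma mem_fiberSet {v : ℤ} : x ∈ fiberSet m i v ↔ ∃ k : Fin m, (k : ℕ) + 1 = x ∧ i k = v := by
  simp [fiberSet]
  tauto

lemma fiber_val {v : ℤ} {j : Fin m} : ((j : ℕ) + 1) ∈ fiberSet m i v ↔ i j = v := by
  rw [mem_fiberSet]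
  constructor
  · rintro ⟨k, hk1, hk2⟩
    have : k = j := Fin.ext (by omega)
    subst this
    exact hk2
  · intro h
    exact ⟨j, rfl, h⟩

lemma fiber_disjoint {v w : ℤ} (hvw : v ≠ w) : Disjoint (fiberSet m i v) (fiberSet m i w) := by
  rw [Finset.disjoint_left]
  intro x hx hx'
  obtain ⟨k, hk1, hk2⟩ := mem_fiberSet.mp hx
  obtain ⟨k', hk1', hk2'⟩ := mem_fiberSet.mp hx'
  have : k = k' := Fin.ext (by omega)
  subst this
  exact hvw (hk2 ▸ hk2')

lemma flatten_sig0 : (sig0 m i).flatten = (Vlist m i).map (fiberSet m i) := by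
  rw [sig0, flatten_map_map, runs_flatten]

lemma good_sig0 : Good (sig0 m i) := by
  constructor
  · rintro op hop
    rw [sig0, List.mem_map] at hop
    obtain ⟨g, hg, rfl⟩ := hop
    constructor
    · intro hnil
      exact runs_ne_nil _ g hg (List.map_eq_nil_iff.mp hnil)
    · intro b hb
      rw [List.mem_map] at hb
      obtain ⟨v, hv, rfl⟩ := hb
      have hvV : v ∈ Vlist m i := by
        rw [← runs_flatten (Vlist m i)]
        exact List.mem_flatten.mpr ⟨g, hg, hv⟩
      obtain ⟨k, hk⟩ := mem_Vlist.mp hvV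
      exact ⟨(k : ℕ) + 1, fiber_val.mpr hk⟩
  · rw [flatten_sig0]
    rw [List.pairwise_map]
    exact Vlist_pairwise.imp_of_mem (fun _ _ hvw => fiber_disjoint (ne_of_lt hvw))

lemma supp_sig0 : supp (sig0 m i) = Finset.Icc 1 m := by
  ext x
  rw [mem_supp, flatten_sig0]
  constructor
  · rintro ⟨b, hb, hx⟩
    rw [List.mem_map] at hb
    obtain ⟨v, _, rfl⟩ := hb
    obtain ⟨k, hk1, _⟩ := mem_fiberSet.mp hx
    rw [Finset.mem_Icc]
    omega
  · intro hx
    rw [Finset.mem_Icc] at hx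
    have hm : 0 < m := by omega
    set k : Fin m := ⟨x - 1, by omega⟩ with hk
    have hx' : ((k : ℕ) + 1) = x := by simp [hk]; omega
    refine ⟨fiberSet m i (i k), List.mem_map.mpr ⟨i k, mem_Vlist.mpr ⟨k, rfl⟩, rfl⟩, ?_⟩
    rw [← hx']
    exact fiber_val.mpr rfl

lemma sameBlock_sig0 {j k : Fin m} :
    sameBlock (sig0 m i) ((j : ℕ) + 1) ((k : ℕ) + 1) ↔ i j = i k := by
  rw [sameBlock_iff_flatten, flatten_sig0]
  constructor
  · rintro ⟨b, hb, hx, hy⟩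
    rw [List.mem_map] at hb
    obtain ⟨v, _, rfl⟩ := hb
    rw [fiber_val.mp hx, fiber_val.mp hy]
  · intro h
    refine ⟨fiberSet m i (i j), List.mem_map.mpr ⟨i j, mem_Vlist.mpr ⟨j, rfl⟩, rfl⟩,
      fiber_val.mpr rfl, fiber_val.mpr h.symm⟩

lemma adjBlock_sig0 {j k : Fin m} :
    adjBlock (sig0 m i) ((j : ℕ) + 1) ((k : ℕ) + 1) ↔ |i j - i k| = 1 := by
  rw [abs_sub_eq_one_iff]
  constructor
  · rintro ⟨op, hop, t, ht, hc⟩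
    rw [sig0, List.mem_map] at hop
    obtain ⟨g, hg, rfl⟩ := hop
    rw [List.length_map] at ht
    have hchain := chain'_getElem! (runs_chain _ g hg) ht
    rw [map_getElem! _ (by omega), map_getElem! _ ht] at hc
    rcases hc with ⟨hx, hy⟩ | ⟨hy, hx⟩
    · left
      rw [fiber_val.mp hx, fiber_val.mp hy]
      exact hchain
    · right
      rw [fiber_val.mp hy, fiber_val.mp hx]
      exact hchain
  · rintro (h | h)
    · obtain ⟨g, hg, t, ht, he1, he2⟩ := runs_pair _ Vlist_pairwise (i j)
        (mem_Vlist.mpr ⟨j, rfl⟩) (by rw [h]; exact mem_Vlist.mpr ⟨k, rfl⟩)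
      refine ⟨g.map (fiberSet m i), List.mem_map.mpr ⟨g, hg, rfl⟩, t, by simpa using ht,
        Or.inl ⟨?_, ?_⟩⟩
      · rw [map_getElem! _ (by omega), he1]
        exact fiber_val.mpr rfl
      · rw [map_getElem! _ ht, he2, h]
        exact fiber_val.mpr rfl
    · obtain ⟨g, hg, t, ht, he1, he2⟩ := runs_pair _ Vlist_pairwise (i k)
        (mem_Vlist.mpr ⟨k, rfl⟩) (by rw [h]; exact mem_Vlist.mpr ⟨j, rfl⟩)
      refine ⟨g.map (fiberSet m i), List.mem_map.mpr ⟨g, hg, rfl⟩, t, by simpa using ht,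
        Or.inr ⟨?_, ?_⟩⟩
      · rw [map_getElem! _ (by omega), he1]
        exact fiber_val.mpr rfl
      · rw [map_getElem! _ ht, he2, h]
        exact fiber_val.mpr rfl

lemma sum_sig0 (hi : ∀ t, i t ∈ Finset.Icc (1 : ℤ) n) :
    ((sig0 m i).map List.length).sum + ((sig0 m i).length - 1) ≤ n := by
  have hmap : (sig0 m i).map List.length = (runs (Vlist m i)).map List.length := by
    rw [sig0, List.map_map]
    simp [Function.comp]
  have hsum : ((runs (Vlist m i)).map List.length).sum = (Vlist m i).length := by
    rw [← List.length_flatten, runs_flatten]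
  have hlen : (sig0 m i).length = (runs (Vlist m i)).length := by
    rw [sig0, List.length_map]
  rw [hmap, hsum, hlen]
  rcases hV : Vlist m i with _ | ⟨a, l⟩
  · simp [runs_nil]
  · have hspan := runs_span l a (hV ▸ Vlist_pairwise)
    have hbounds : ∀ v ∈ Vlist m i, 1 ≤ v ∧ v ≤ (n : ℤ) := by
      intro v hv
      obtain ⟨k, hk⟩ := mem_Vlist.mp hv
      have := hi k
      rw [Finset.mem_Icc] at this
      omega
    have ha : 1 ≤ a := (hbounds a (by rw [hV]; exact List.mem_cons_self)).1
    have hlast : (a :: l).getLast (List.cons_ne_nil a l) ≤ (n : ℤ) := by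
      refine (hbounds _ ?_).2
      rw [hV]
      exact List.getLast_mem _
    obtain ⟨g, gs, hstruct⟩ := runs_cons_struct a l
    have hlpos : 0 < (runs (a :: l)).length := by rw [hstruct]; simp
    have hkey : ((a :: l).length : ℤ) + ((runs (a :: l)).length : ℤ) ≤ (n : ℤ) + 1 := by
      omega
    have hkey' : (a :: l).length + (runs (a :: l)).length ≤ n + 1 := by exact_mod_cast hkey
    omega

/-- Transfer of goodness along permutations. -/
lemma good_of_perm (h : σ.Perm τ) (hτ : Good τ) : Good σ := by
  constructor
  · intro op hop
    exact hτ.1 op (h.mem_iff.mp hop)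
  · rw [List.pairwise_flatten]
    have h2 := List.pairwise_flatten.mp hτ.2
    refine ⟨fun l hl => h2.1 l (h.mem_iff.mp hl), ?_⟩
    have hsym : ∀ {x y : OP}, (∀ a ∈ x, ∀ b ∈ y, Disjoint a b) →
        (∀ a ∈ y, ∀ b ∈ x, Disjoint a b) := by
      intro x y hxy a ha b hb
      exact (hxy b hb a ha).symm
    exact (h.pairwise_iff hsym).mpr h2.2

lemma supp_of_perm (h : σ.Perm τ) : supp σ = supp τ := by
  ext z
  rw [mem_supp, mem_supp]
  constructor <;>
    (rintro ⟨b, hb, hz⟩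
     rw [List.mem_flatten] at hb
     obtain ⟨op, hop, hbop⟩ := hb)
  · exact ⟨b, List.mem_flatten.mpr ⟨op, h.mem_iff.mp hop, hbop⟩, hz⟩
  · exact ⟨b, List.mem_flatten.mpr ⟨op, h.mem_iff.mpr hop, hbop⟩, hz⟩

lemma sameBlock_of_perm (h : σ.Perm τ) : sameBlock σ x y ↔ sameBlock τ x y := by
  constructor <;> (rintro ⟨op, hop, r⟩)
  · exact ⟨op, h.mem_iff.mp hop, r⟩
  · exact ⟨op, h.mem_iff.mpr hop, r⟩

lemma adjBlock_of_perm (h : σ.Perm τ) : adjBlock σ x y ↔ adjBlock τ x y := by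
  constructor <;> (rintro ⟨op, hop, r⟩)
  · exact ⟨op, h.mem_iff.mp hop, r⟩
  · exact ⟨op, h.mem_iff.mpr hop, r⟩

/-- Entry-level reconstruction of the Bott matrix. -/
lemma FMat_eq_bott_of_rels {σ : Assembly}
    (hsame : ∀ j k : Fin m, (sameBlock σ ((j : ℕ) + 1) ((k : ℕ) + 1) ↔ i j = i k))
    (hadj : ∀ j k : Fin m, (adjBlock σ ((j : ℕ) + 1) ((k : ℕ) + 1) ↔ |i j - i k| = 1)) :
    FMat m σ = bottMatrix m i := by
  funext j k
  simp only [FMat, bottMatrix]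
  by_cases h1 : j = k
  · simp [h1]
  · simp only [h1, if_false]
    by_cases h2 : k < j
    · simp only [h2, if_true]
      by_cases h3 : i j = i k
      · simp [h3, (hsame j k).mpr h3]
      · have h3' : ¬ sameBlock σ ((j : ℕ) + 1) ((k : ℕ) + 1) := fun hc => h3 ((hsame j k).mp hc)
        by_cases h4 : |i j - i k| = 1
        · simp [h3, h3', h4, (hadj j k).mpr h4]
        · have h4' : ¬ adjBlock σ ((j : ℕ) + 1) ((k : ℕ) + 1) := fun hc => h4 ((hadj j k).mp hc)
          simp [h3, h3', h4, h4']
    · simp [h2]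

/-- Existence of an AOP realizing a given Bott matrix. -/
lemma exists_AOP (hi : ∀ t, i t ∈ Finset.Icc (1 : ℤ) n) :
    ∃ σ : Assembly, IsAOP n m σ ∧ FMat m σ = bottMatrix m i := by
  classical
  set le : OP → OP → Bool := fun o₁ o₂ => decide ((Uop o₁).min ≤ (Uop o₂).min) with hle
  set σ : Assembly := (sig0 m i).mergeSort le with hσdef
  have hperm : σ.Perm (sig0 m i) := List.mergeSort_perm _ _
  have hGood : Good σ := good_of_perm hperm good_sig0
  have hsupp : supp σ = Finset.Icc 1 m := by rw [supp_of_perm hperm, supp_sig0]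
  refine ⟨σ, ⟨hGood.1, hGood.2, hsupp, ?_, ?_⟩, ?_⟩
  · -- sortedness in the min order
    have hsorted : σ.Pairwise (fun o₁ o₂ => le o₁ o₂ = true) := by
      apply List.pairwise_mergeSort
      · intro a b c hab hbc
        simp only [hle, decide_eq_true_eq] at hab hbc ⊢
        exact le_trans hab hbc
      · intro a b
        simp only [hle, Bool.or_eq_true, decide_eq_true_eq]
        exact le_total _ _
    have hle' : σ.Pairwise (fun o₁ o₂ => (Uop o₁).min ≤ (Uop o₂).min) :=
      hsorted.imp (fun h => by simpa [hle] using h)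
    have hcross0 : (sig0 m i).Pairwise (fun o₁ o₂ => ∀ b ∈ o₁, ∀ c ∈ o₂, Disjoint b c) :=
      (List.pairwise_flatten.mp good_sig0.2).2
    have hsymcross : ∀ {x y : OP}, (∀ a ∈ x, ∀ b ∈ y, Disjoint a b) →
        (∀ a ∈ y, ∀ b ∈ x, Disjoint a b) := by
      intro x y hxy a ha b hb
      exact (hxy b hb a ha).symm
    have hcross : σ.Pairwise (fun o₁ o₂ => ∀ b ∈ o₁, ∀ c ∈ o₂, Disjoint b c) :=
      (hperm.pairwise_iff hsymcross).mpr hcross0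
    have hne : σ.Pairwise (fun o₁ o₂ => (Uop o₁).min ≠ (Uop o₂).min) := by
      refine hcross.imp_of_mem (fun {o₁ o₂} h1 h2 hd => ?_)
      have hU : Disjoint (Uop o₁) (Uop o₂) := by
        rw [Finset.disjoint_left]
        intro z hz1 hz2
        obtain ⟨b, hb, hzb⟩ := mem_Uop.mp hz1
        obtain ⟨c, hc, hzc⟩ := mem_Uop.mp hz2
        exact absurd hzc (Finset.disjoint_left.mp (hd b hb c hc) hzb)
      have hn1 : (Uop o₁).Nonempty := Uop_nonempty hGood h1
      have hn2 : (Uop o₂).Nonempty := Uop_nonempty hGood h2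
      intro hmin
      have h1' : ((Uop o₁).min' hn1 : WithTop ℕ) = (Uop o₁).min := Finset.coe_min' hn1
      have h2' : ((Uop o₂).min' hn2 : WithTop ℕ) = (Uop o₂).min := Finset.coe_min' hn2
      have : (Uop o₁).min' hn1 = (Uop o₂).min' hn2 := by
        have := h1'.trans (hmin.trans h2'.symm)
        exact_mod_cast this
      have hm1 := Finset.min'_mem (Uop o₁) hn1
      have hm2 := Finset.min'_mem (Uop o₂) hn2
      rw [this] at hm1
      exact absurd hm2 (Finset.disjoint_left.mp hU hm1)
    exact (hle'.and hne).imp (fun h => lt_of_le_of_ne h.1 h.2)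
  · -- the cardinality bound
    have h1 : (σ.map List.length).sum = ((sig0 m i).map List.length).sum :=
      (hperm.map List.length).sum_eq
    have h2 : σ.length = (sig0 m i).length := hperm.length_eq
    rw [h1, h2]
    exact sum_sig0 hi
  · exact FMat_eq_bott_of_rels
      (fun j k => (sameBlock_of_perm hperm).trans sameBlock_sig0)
      (fun j k => (adjBlock_of_perm hperm).trans adjBlock_sig0)

end Part8
noncomputable def eAux (n m : ℕ) :
    Quot (fun σ τ : {σ : Assembly // IsAOP n m σ} => SimRel σ.1 τ.1) → (BSet n m) :=
  Quot.lift (fun σ => ⟨FMat m σ.1, FMat_mem_BSet σ.2⟩)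
    (fun a b h => Subtype.ext (FMat_eq_of_simRel h))

/-- for `σ, τ ∈ AOP(n,m)`, `F(σ) = F(τ)` iff `σ ∼ τ`; consequently
there is a bijection between `B(n,m)` and `AOP(n,m)/∼`. -/
theorem F_eq_iff_sim (n m : ℕ) :
    (∀ σ τ : Assembly, IsAOP n m σ → IsAOP n m τ →
      (FMat m σ = FMat m τ ↔ SimRel σ τ)) ∧
    Nonempty ((BSet n m) ≃
      Quot (fun σ τ : {σ : Assembly // IsAOP n m σ} => SimRel σ.1 τ.1)) := by
  constructor
  · intro σ τ hσ hτ
    exact FMat_eq_iff_simRel hσ hτ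
  · have hbij : Function.Bijective (eAux n m) := by
      constructor
      · intro qa qb hab
        induction qa using Quot.ind with
        | _ a =>
          induction qb using Quot.ind with
          | _ b =>
            apply Quot.sound
            have h1 : FMat m a.1 = FMat m b.1 := congrArg Subtype.val hab
            exact (FMat_eq_iff_simRel a.2 b.2).mp h1
      · rintro ⟨B, hB⟩
        obtain ⟨i, hi, rfl⟩ := hB
        obtain ⟨σ, hσ, hFσ⟩ := exists_AOP hi
        refine ⟨Quot.mk _ ⟨σ, hσ⟩, ?_⟩
        have : eAux n m (Quot.mk _ ⟨σ, hσ⟩) = ⟨FMat m σ, FMat_mem_BSet hσ⟩ := rfl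
        rw [this]
        exact Subtype.ext hFσ
    exact ⟨(Equiv.ofBijective (eAux n m) hbij).symm⟩
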